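/- Let G be a finite abstract simplicial complex with connection matrix L, regarded as a matrix over the rationals. Then L is invertible, and the sum of all entries of the inverse matrix g = L^{-1} equals the Euler characteristic of G: ∑_{x,y∈G} g(x,y) = χ(G). -/

import Mathlib

open Finset BigOperators
open scoped Matrix

variable {α : Type*} [DecidableEq α]

/-- A finite abstract simplicial complex: a finite collection of nonempty finite
sets closed under taking nonempty subsets. -/
def IsComplex (G : Finset (Finset α)) : Prop :=
  (∀ x ∈ G, x.Nonempty) ∧ ∀ x ∈ G, ∀ y : Finset α, y.Nonempty → y ⊆ x → y ∈ G

/-- ω(x) = (-1)^(|x|-1). -/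
def omegaS (x : Finset α) : ℤ := (-1) ^ (x.card - 1)

/-- Euler characteristic χ(G) = ∑_{x∈G} ω(x). -/
def chi (G : Finset (Finset α)) : ℤ := ∑ x ∈ G, omegaS x

/-- The connection matrix over ℚ: L(x,y)=1 if x and y intersect, 0 otherwise. -/
def connL (G : Finset (Finset α)) : Matrix G G ℚ :=
  fun x y => if (x.1 ∩ y.1).Nonempty then 1 else 0

/-- The inclusion matrix F(z,x) = [z ⊆ x]. -/
def inclF (G : Finset (Finset α)) : Matrix G G ℚ :=
  fun z x => if z.1 ⊆ x.1 then 1 else 0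

/-- The diagonal matrix of omegas. -/
noncomputable def diagD (G : Finset (Finset α)) : Matrix G G ℚ :=
  Matrix.diagonal (fun x => (omegaS x.1 : ℚ))

lemma omegaS_cast (x : Finset α) : ((omegaS x : ℤ) : ℚ) = (-1 : ℚ) ^ (x.card - 1) := by
  simp [omegaS]

lemma omegaS_sq (x : Finset α) : ((omegaS x : ℤ) : ℚ) * ((omegaS x : ℤ) : ℚ) = 1 := by
  rw [omegaS_cast, ← pow_add, ← two_mul, pow_mul]; norm_num

lemma omegaS_ne_zero (x : Finset α) : ((omegaS x : ℤ) : ℚ) ≠ 0 := by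
  rw [omegaS_cast]; positivity

/-- key combinatorial identity: sum of omega over nonempty subsets of a nonempty set is 1 -/
lemma sum_omega_subsets (w : Finset α) (hw : w.Nonempty) :
    ∑ z ∈ w.powerset.filter (fun z => z.Nonempty), ((omegaS z : ℤ) : ℚ) = 1 := by
  have h0 : (∑ m ∈ w.powerset, (-1 : ℤ) ^ m.card) = 0 :=
    Finset.sum_powerset_neg_one_pow_card_of_nonempty hw
  have hsplit := Finset.sum_filter_add_sum_filter_not w.powerset
    (fun z => z.Nonempty) (fun m => (-1 : ℤ) ^ m.card)
  have hne : w.powerset.filter (fun z => ¬ z.Nonempty) = {∅} := by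
    ext z
    simp [Finset.not_nonempty_iff_eq_empty]
    rintro rfl; exact Finset.empty_subset w
  rw [hne, h0] at hsplit
  simp only [Finset.sum_singleton, Finset.card_empty, pow_zero] at hsplit
  have h1 : ∑ z ∈ w.powerset.filter (fun z => z.Nonempty), (-1 : ℤ) ^ z.card = -1 := by
    linarith
  have h2 : ∀ z ∈ w.powerset.filter (fun z => z.Nonempty),
      (omegaS z : ℤ) = -((-1 : ℤ) ^ z.card) := by
    intro z hz
    simp only [Finset.mem_filter] at hz
    have hc : z.card ≠ 0 := by
      simpa [Finset.card_eq_zero, ← Finset.nonempty_iff_ne_empty] using hz.2.ne_empty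
    have h4 : (-1 : ℤ) ^ z.card = (-1) ^ (z.card - 1) * (-1) := by
      rw [← pow_succ]
      congr 1
      omega
    rw [omegaS, h4]
    ring
  have h3 : ∑ z ∈ w.powerset.filter (fun z => z.Nonempty), (omegaS z : ℤ) = 1 := by
    rw [Finset.sum_congr rfl h2, Finset.sum_neg_distrib, h1]
    ring
  exact_mod_cast h3

lemma filter_subset_complex {G : Finset (Finset α)} (hG : IsComplex G) {x w : Finset α}
    (hx : x ∈ G) (hw : w ⊆ x) :
    G.filter (fun z => z ⊆ w) = w.powerset.filter (fun z => z.Nonempty) := by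
  ext z
  simp only [Finset.mem_filter, Finset.mem_powerset]
  constructor
  · rintro ⟨hzG, hzw⟩
    exact ⟨hzw, hG.1 z hzG⟩
  · rintro ⟨hzw, hzne⟩
    exact ⟨hG.2 x hx z hzne (hzw.trans hw), hzw⟩

lemma sum_omega_G {G : Finset (Finset α)} (hG : IsComplex G) {x w : Finset α}
    (hx : x ∈ G) (hw : w ⊆ x) :
    ∑ z ∈ G, (if z ⊆ w then ((omegaS z : ℤ) : ℚ) else 0)
      = if w.Nonempty then 1 else 0 := by
  rw [Finset.sum_ite, Finset.sum_const_zero, add_zero, filter_subset_complex hG hx hw]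
  by_cases h : w.Nonempty
  · rw [if_pos h, sum_omega_subsets w h]
  · rw [if_neg h]
    rw [Finset.not_nonempty_iff_eq_empty] at h
    subst h
    simp [Finset.filter_singleton]

lemma connL_factorization {G : Finset (Finset α)} (hG : IsComplex G) :
    connL G = (inclF G)ᵀ * diagD G * inclF G := by
  ext x y
  have hFD : ∀ x z : G, ((inclF G)ᵀ * diagD G) x z
      = (if z.1 ⊆ x.1 then ((omegaS z.1 : ℤ) : ℚ) else 0) := by
    intro x z
    rw [diagD, Matrix.mul_diagonal]
    simp [inclF, ite_mul]
  have hsum : ((inclF G)ᵀ * diagD G * inclF G) x y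
      = ∑ z : G, (if z.1 ⊆ x.1 ∩ y.1 then ((omegaS z.1 : ℤ) : ℚ) else 0) := by
    rw [Matrix.mul_apply]
    refine Finset.sum_congr rfl fun z _ => ?_
    rw [hFD]
    by_cases h1 : z.1 ⊆ x.1 <;> by_cases h2 : z.1 ⊆ y.1 <;>
      simp [h1, h2, inclF, Finset.subset_inter_iff]
  rw [hsum]
  have := sum_omega_G hG x.2 (Finset.inter_subset_left : x.1 ∩ y.1 ⊆ x.1)
  rw [← Finset.sum_coe_sort G (fun z => if z ⊆ x.1 ∩ y.1 then ((omegaS z : ℤ) : ℚ) else 0)]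
    at this
  rw [this]
  rfl

lemma det_inclF (G : Finset (Finset α)) : (inclF G).det = 1 := by
  have hBT : (inclF G).BlockTriangular (fun x => (x : Finset α).card) := by
    intro i j h
    simp only [inclF, ite_eq_right_iff]
    intro hsub
    exact absurd (Finset.card_le_card hsub) (not_le.2 h)
  rw [hBT.det]
  refine Finset.prod_eq_one fun k _ => ?_
  have : (inclF G).toSquareBlock (fun x => (x : Finset α).card) k = 1 := by
    ext i j
    simp only [Matrix.toSquareBlock_def, inclF, Matrix.one_apply]
    by_cases hsub : (i.1 : Finset α) ⊆ (j.1 : Finset α)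
    · have hij : i = j := by
        have : (i.1 : Finset α) = (j.1 : Finset α) :=
          Finset.eq_of_subset_of_card_le hsub (by rw [i.2, j.2])
        exact Subtype.ext (Subtype.ext this)
      simp [hsub, hij]
    · have hij : i ≠ j := fun h => hsub (h ▸ Finset.Subset.refl _)
      simp [hsub, hij]; exact hsub
  rw [this, Matrix.det_one]

theorem energy_theorem (G : Finset (Finset α)) (hG : IsComplex G) :
    IsUnit (connL G).det ∧
    ∑ x : G, ∑ y : G, (connL G)⁻¹ x y = (chi G : ℚ) := by
  classical
  set F := inclF G with hF
  set D := diagD G with hD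
  have hfac : connL G = Fᵀ * D * F := connL_factorization hG
  have hdetF : F.det = 1 := det_inclF G
  have hdetD : D.det ≠ 0 := by
    rw [hD, diagD, Matrix.det_diagonal]
    exact Finset.prod_ne_zero_iff.2 fun x _ => omegaS_ne_zero x.1
  have hdetL : (connL G).det = D.det := by
    rw [hfac, Matrix.det_mul, Matrix.det_mul, Matrix.det_transpose, hdetF]
    ring
  have hUnit : IsUnit (connL G).det := by
    rw [hdetL]
    exact isUnit_iff_ne_zero.2 hdetD
  refine ⟨hUnit, ?_⟩
  -- v is the omega vector
  set v : G → ℚ := fun x => ((omegaS x.1 : ℤ) : ℚ) with hv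
  have key : ∀ x : G, ∑ z : G, (if z.1 ⊆ x.1 then ((omegaS z.1 : ℤ) : ℚ) else 0) = 1 := by
    intro x
    have := sum_omega_G hG x.2 (Finset.Subset.refl x.1)
    rw [← Finset.sum_coe_sort G] at this
    rw [this, if_pos (hG.1 x.1 x.2)]
  -- w is the vector of row sums of the inverse
  set w : G → ℚ := fun x => ∑ y : G, (connL G)⁻¹ x y with hw
  have hwvec : w = (connL G)⁻¹ *ᵥ (fun _ => 1) := by
    funext x
    simp [hw, Matrix.mulVec, dotProduct]
  have hLw : connL G *ᵥ w = fun _ => 1 := by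
    rw [hwvec, Matrix.mulVec_mulVec, Matrix.mul_nonsing_inv _ hUnit, Matrix.one_mulVec]
  -- Fᵀ *ᵥ v = 1
  have hFTv : Fᵀ *ᵥ v = fun _ => 1 := by
    funext x
    simp only [Matrix.mulVec, dotProduct, Matrix.transpose_apply, hF, inclF, hv]
    conv_rhs => rw [← key x]
    refine Finset.sum_congr rfl fun z _ => ?_
    by_cases h : z.1 ⊆ x.1 <;> simp [h]
  -- cancel Fᵀ : D *ᵥ (F *ᵥ w) = v
  have hFTdet : IsUnit Fᵀ.det := by rw [Matrix.det_transpose, hdetF]; exact isUnit_one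
  have hcancel : D *ᵥ (F *ᵥ w) = v := by
    have h1 : Fᵀ *ᵥ (D *ᵥ (F *ᵥ w)) = Fᵀ *ᵥ v := by
      rw [Matrix.mulVec_mulVec, Matrix.mulVec_mulVec, ← hfac, hLw, hFTv]
    have h2 := congrArg (fun u => (Fᵀ)⁻¹ *ᵥ u) h1
    simpa [Matrix.mulVec_mulVec, ← Matrix.mul_assoc, Matrix.nonsing_inv_mul _ hFTdet,
      Matrix.one_mulVec] using h2
  -- hence F *ᵥ w = 1
  have hFw : F *ᵥ w = fun _ => 1 := by
    funext x
    have hx := congrFun hcancel x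
    simp only [hD, diagD, Matrix.mulVec_diagonal] at hx
    have h0 := omegaS_ne_zero x.1
    refine mul_left_cancel₀ h0 ?_
    rw [hx, hv, mul_one]
  -- v ᵥ* F = 1
  have hvF : v ᵥ* F = fun _ => 1 := by
    funext y
    simp only [Matrix.vecMul, dotProduct, hF, inclF, hv]
    conv_rhs => rw [← key y]
    refine Finset.sum_congr rfl fun z _ => ?_
    by_cases h : z.1 ⊆ y.1 <;> simp [h]
  -- conclude
  have hsum : ∑ x : G, w x = ∑ x : G, v x := by
    have h1 : v ⬝ᵥ (F *ᵥ w) = ∑ x : G, v x := by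
      rw [hFw]; simp [dotProduct]
    have h2 : v ⬝ᵥ (F *ᵥ w) = ∑ x : G, w x := by
      rw [Matrix.dotProduct_mulVec, hvF]; simp [dotProduct]
    rw [← h2, h1]
  calc ∑ x : G, ∑ y : G, (connL G)⁻¹ x y = ∑ x : G, w x := rfl
    _ = ∑ x : G, v x := hsum
    _ = (chi G : ℚ) := by
        rw [hv, chi]
        push_cast
        exact Finset.sum_coe_sort G (fun x => ((omegaS x : ℤ) : ℚ))
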